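/- Let Λ ⊂ ℤ and f ∈ H_Λ with ‖f‖₂ = 1, and set F = |f|². Then for any finite interval J of integers, Σ_{n∈J} |F̂(n)| ≤ D_Λ(|J|), where F̂(n) is the n-th Fourier coefficient of F and D_Λ(x) = sup_{t∈ℝ}|Λ ∩ [t,t+x]|. -/

import Mathlib

open MeasureTheory Complex
open scoped ENNReal Real

instance : Fact ((0:ℝ) < 1) := ⟨one_pos⟩

/-- Haar (Lebesgue) probability measure on the circle `𝕋 = ℝ/ℤ`. -/
noncomputable def μT : Measure (AddCircle (1:ℝ)) := AddCircle.haarAddCircle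

/-- `H_Λ`: the closed linear span in `L²(𝕋)` of the characters `e^{2πinξ}`, `n ∈ Λ`. -/
noncomputable def HLam (Λ : Set ℤ) : Submodule ℂ (Lp ℂ 2 μT) :=
  (Submodule.span ℂ ((fun n : ℤ => (fourierLp 2 n : Lp ℂ 2 μT)) '' Λ)).topologicalClosure

/-- `D_Λ(x) = sup_{t∈ℝ} |Λ ∩ [t, t+x]|` for `Λ ⊆ ℤ` (as an extended count). -/
noncomputable def DLamZ (Λ : Set ℤ) (x : ℝ) : ℝ≥0∞ :=
  ⨆ t : ℝ, (((fun n : ℤ => (n : ℝ)) '' Λ ∩ Set.Icc t (t + x)).encard : ℝ≥0∞)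

open scoped ComplexConjugate InnerProductSpace

/-! ### Auxiliary analytic lemmas -/

lemma memLp_mulFourier (f : Lp ℂ 2 μT) (n : ℤ) :
    MemLp (fun x : AddCircle (1:ℝ) => fourier (-n) x * f x) 2 μT := by
  have hf : MemLp (fun x => (f : AddCircle (1:ℝ) → ℂ) x) 2 μT := Lp.memLp f
  refine ⟨(map_continuous (fourier (-n))).aestronglyMeasurable.mul hf.1, ?_⟩
  calc eLpNorm (fun x : AddCircle (1:ℝ) => fourier (-n) x * f x) 2 μT
      ≤ eLpNorm (fun x => (f : AddCircle (1:ℝ) → ℂ) x) 2 μT :=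
        eLpNorm_mono (by intro x; rw [norm_mul]; simp [Circle.norm_coe])
    _ < ⊤ := hf.2

/-- The multiplication of `f` by the character `e^{-2πinξ}`, as an element of `L²`. -/
noncomputable def gn (f : Lp ℂ 2 μT) (n : ℤ) : Lp ℂ 2 μT := (memLp_mulFourier f n).toLp _

lemma coeFn_gn (f : Lp ℂ 2 μT) (n : ℤ) :
    (gn f n : Lp ℂ 2 μT) =ᵐ[AddCircle.haarAddCircle]
      (fun x : AddCircle (1:ℝ) => fourier (-n) x * f x) :=
  (memLp_mulFourier f n).coeFn_toLp

lemma fourierCoeff_gn (f : Lp ℂ 2 μT) (n m : ℤ) :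
    fourierCoeff ((gn f n : Lp ℂ 2 μT) : AddCircle (1:ℝ) → ℂ) m
      = fourierCoeff (f : AddCircle (1:ℝ) → ℂ) (m + n) := by
  unfold fourierCoeff
  rw [integral_congr_ae (g := fun t => fourier (-m) t • (fourier (-n) t * f t))
    ((coeFn_gn f n).mono (fun x hx => by rw [hx]))]
  apply integral_congr_ae
  filter_upwards with x
  simp only [smul_eq_mul, ← mul_assoc, ← fourier_add, neg_add]

lemma inner_f_gn (f : Lp ℂ 2 μT) (n : ℤ) :
    (inner ℂ f (gn f n) : ℂ)
      = fourierCoeff (fun ξ : AddCircle (1:ℝ) => ((‖f ξ‖ ^ 2 : ℝ) : ℂ)) n := by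
  rw [MeasureTheory.L2.inner_def]
  unfold fourierCoeff
  apply integral_congr_ae
  filter_upwards [coeFn_gn f n] with x hx
  rw [RCLike.inner_apply, hx, smul_eq_mul]
  rw [show fourier (-n) x * f x * conj (f x) = fourier (-n) x * (conj (f x) * f x) by ring,
    Complex.conj_mul']
  push_cast; ring

lemma repr_eq (f : Lp ℂ 2 μT) (m : ℤ) :
    (inner ℂ (fourierBasis m) f : ℂ) = fourierCoeff (f : AddCircle (1:ℝ) → ℂ) m := by
  exact (fourierBasis.repr_apply_apply f m).symm.trans (fourierBasis_repr f m)

/-- The Fourier coefficients of `|f|²` are given by the autocorrelation of those of `f`. -/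
lemma hasSum_conv (f : Lp ℂ 2 μT) (n : ℤ) :
    HasSum (fun m : ℤ => conj (fourierCoeff (f : AddCircle (1:ℝ) → ℂ) m)
        * fourierCoeff (f : AddCircle (1:ℝ) → ℂ) (m + n))
      (fourierCoeff (fun ξ : AddCircle (1:ℝ) => ((‖f ξ‖ ^ 2 : ℝ) : ℂ)) n) := by
  have h : HasSum (fun i => inner ℂ f (fourierBasis i) * inner ℂ (fourierBasis i) (gn f n))
      (inner ℂ f (gn f n) : ℂ) := fourierBasis.hasSum_inner_mul_inner f (gn f n)
  rw [inner_f_gn] at h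
  convert h using 2 with m
  erw [← inner_conj_symm, repr_eq]
  erw [← fourierBasis.repr_apply_apply, fourierBasis_repr, fourierCoeff_gn]

/-- Parseval's identity for a unit vector of `L²`. -/
lemma hasSum_parseval (f : Lp ℂ 2 μT) (hnorm : ‖f‖ = 1) :
    HasSum (fun m : ℤ => ‖fourierCoeff (f : AddCircle (1:ℝ) → ℂ) m‖ ^ 2) 1 := by
  have h : HasSum (fun i => inner ℂ f (fourierBasis i) * inner ℂ (fourierBasis i) f)
      (inner ℂ f f : ℂ) := fourierBasis.hasSum_inner_mul_inner f f
  have h2 : ∀ m : ℤ, (inner ℂ f (fourierBasis m) : ℂ) * inner ℂ (fourierBasis m) f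
      = ((‖fourierCoeff (f : AddCircle (1:ℝ) → ℂ) m‖ ^ 2 : ℝ) : ℂ) := by
    intro m
    erw [← inner_conj_symm, repr_eq f m, Complex.conj_mul']
    push_cast; ring
  simp only [h2] at h
  have h3 : (inner ℂ f f : ℂ) = ((1:ℝ):ℂ) := by
    rw [inner_self_eq_norm_sq_to_K, hnorm]; norm_num
  rw [h3] at h
  exact_mod_cast Complex.hasSum_ofReal.mp h

/-- For `f ∈ H_Λ`, the Fourier coefficients of `f` outside `Λ` vanish. -/
lemma coeff_vanish (Λ : Set ℤ) (f : Lp ℂ 2 μT) (hf : f ∈ HLam Λ) (k : ℤ) (hk : k ∉ Λ) :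
    fourierCoeff (f : AddCircle (1:ℝ) → ℂ) k = 0 := by
  rw [← repr_eq]
  set φ : Lp ℂ 2 μT →L[ℂ] ℂ := innerSL ℂ (fourierBasis k) with hφ
  have : f ∈ LinearMap.ker (φ : Lp ℂ 2 μT →ₗ[ℂ] ℂ) := by
    refine Submodule.topologicalClosure_minimal _ ?_ (ContinuousLinearMap.isClosed_ker φ) hf
    refine Submodule.span_le.mpr ?_
    rintro x ⟨n, hn, rfl⟩
    have hne : k ≠ n := fun h => hk (h ▸ hn)
    simp only [SetLike.mem_coe, LinearMap.mem_ker, ContinuousLinearMap.coe_coe, hφ,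
      innerSL_apply_apply]
    rw [show (fourierLp 2 n : Lp ℂ 2 μT) = fourierBasis n by rw [coe_fourierBasis]]
    exact fourierBasis.orthonormal.2 hne
  exact this

/-! ### Auxiliary counting lemmas -/

open Classical in
lemma count_add_le (Λ : Set ℤ) (m a b : ℤ) :
    (((Finset.Icc a b).filter (fun n => m + n ∈ Λ)).card : ℝ≥0∞)
      ≤ DLamZ Λ ((Finset.Icc a b).card : ℝ) := by
  rcases Finset.eq_empty_or_nonempty ((Finset.Icc a b).filter (fun n => m + n ∈ Λ)) with h | h
  · simp [h]
  · obtain ⟨n₀, hn₀⟩ := h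
    simp only [Finset.mem_filter, Finset.mem_Icc] at hn₀
    have hab : a ≤ b := le_trans hn₀.1.1 hn₀.1.2
    have hcard : ((Finset.Icc a b).card : ℝ) = (b : ℝ) + 1 - a := by
      rw [Int.card_Icc]
      have h2 : (((b + 1 - a).toNat : ℤ) : ℝ) = ((b + 1 - a : ℤ) : ℝ) := by
        exact_mod_cast congrArg (fun z : ℤ => (z : ℝ)) (Int.toNat_of_nonneg (by omega))
      push_cast at h2 ⊢
      linarith
    set x : ℝ := ((Finset.Icc a b).card : ℝ)
    set s := (Finset.Icc a b).filter (fun n => m + n ∈ Λ) with hs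
    set t : ℝ := (m : ℝ) + a
    have key : ((s.image (fun n : ℤ => ((m + n : ℤ) : ℝ))) : Set ℝ)
        ⊆ (fun n : ℤ => (n : ℝ)) '' Λ ∩ Set.Icc t (t + x) := by
      intro y hy
      simp only [Finset.coe_image, Set.mem_image, Finset.mem_coe, hs, Finset.mem_filter,
        Finset.mem_Icc] at hy
      obtain ⟨n, ⟨⟨hn1, hn2⟩, hnΛ⟩, rfl⟩ := hy
      refine ⟨⟨m + n, hnΛ, rfl⟩, ?_, ?_⟩
      · push_cast; simp only [t]; linarith [(by exact_mod_cast hn1 : (a:ℝ) ≤ n)]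
      · have : (n : ℝ) ≤ b := by exact_mod_cast hn2
        simp only [t, hcard]; push_cast; linarith
    have hinj : Set.InjOn (fun n : ℤ => ((m + n : ℤ) : ℝ)) s := by
      intro p _ q _ hpq
      simpa using hpq
    calc (s.card : ℝ≥0∞) = ((s.image (fun n : ℤ => ((m + n : ℤ) : ℝ))).card : ℝ≥0∞) := by
          rw [Finset.card_image_of_injOn hinj]
      _ = (((s.image (fun n : ℤ => ((m + n : ℤ) : ℝ))) : Set ℝ).encard : ℝ≥0∞) := by
          rw [Set.encard_coe_eq_coe_finsetCard]; rfl
      _ ≤ (((fun n : ℤ => (n : ℝ)) '' Λ ∩ Set.Icc t (t + x)).encard : ℝ≥0∞) := by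
          exact_mod_cast Set.encard_le_encard key
      _ ≤ DLamZ Λ x :=
          le_iSup (fun t : ℝ =>
            (((fun n : ℤ => (n : ℝ)) '' Λ ∩ Set.Icc t (t + x)).encard : ℝ≥0∞)) t

open Classical in
lemma count_sub_le (Λ : Set ℤ) (m a b : ℤ) :
    (((Finset.Icc a b).filter (fun n => m - n ∈ Λ)).card : ℝ≥0∞)
      ≤ DLamZ Λ ((Finset.Icc a b).card : ℝ) := by
  have hcard2 : (Finset.Icc (-b) (-a)).card = (Finset.Icc a b).card := by
    rw [Int.card_Icc, Int.card_Icc]; congr 1; omega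
  have hfilter : ((Finset.Icc a b).filter (fun n => m - n ∈ Λ)).card
      = ((Finset.Icc (-b) (-a)).filter (fun n => m + n ∈ Λ)).card := by
    apply Finset.card_bij' (fun n _ => -n) (fun n _ => -n)
    · intro n _; simp
    · intro n _; simp
    · intro n hn
      simp only [Finset.mem_filter, Finset.mem_Icc] at hn ⊢
      exact ⟨by omega, by rw [← sub_eq_add_neg]; exact hn.2⟩
    · intro n hn
      simp only [Finset.mem_filter, Finset.mem_Icc] at hn ⊢
      exact ⟨by omega, by rw [sub_neg_eq_add]; exact hn.2⟩
  rw [hfilter, ← hcard2]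
  exact count_add_le Λ m (-b) (-a)

/-! ### The per-coefficient bound -/

set_option maxHeartbeats 1000000 in
open Classical in
lemma per_n (Λ : Set ℤ) (f : Lp ℂ 2 μT) (hf : f ∈ HLam Λ) (hnorm : ‖f‖ = 1) (n : ℤ) :
    ENNReal.ofReal ‖fourierCoeff (fun ξ : AddCircle (1:ℝ) => ((‖f ξ‖ ^ 2 : ℝ) : ℂ)) n‖
      ≤ (∑' m : ℤ, (if m + n ∈ Λ then 1 else 0)
            * ENNReal.ofReal (‖fourierCoeff (f : AddCircle (1:ℝ) → ℂ) m‖ ^ 2)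
        + ∑' m : ℤ, (if m - n ∈ Λ then 1 else 0)
            * ENNReal.ofReal (‖fourierCoeff (f : AddCircle (1:ℝ) → ℂ) m‖ ^ 2)) / 2 := by
  set c : ℤ → ℂ := fun m => fourierCoeff (f : AddCircle (1:ℝ) → ℂ) m with hc
  have hsq : Summable (fun m : ℤ => ‖c m‖ ^ 2) := (hasSum_parseval f hnorm).summable
  have hsq' : Summable (fun m : ℤ => ‖c (m + n)‖ ^ 2) :=
    hsq.comp_injective (add_left_injective n)
  have hprod : Summable (fun m : ℤ => ‖c m‖ * ‖c (m + n)‖) := by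
    exact Summable.of_nonneg_of_le (fun m => by positivity)
      (fun m => by nlinarith [sq_nonneg (‖c m‖ - ‖c (m + n)‖)])
      ((hsq.add hsq').div_const 2)
  have h1 : ‖fourierCoeff (fun ξ : AddCircle (1:ℝ) => ((‖f ξ‖ ^ 2 : ℝ) : ℂ)) n‖
      ≤ ∑' m : ℤ, ‖c m‖ * ‖c (m + n)‖ := by
    rw [← (hasSum_conv f n).tsum_eq]
    calc ‖∑' m : ℤ, conj (c m) * c (m + n)‖ ≤ ∑' m : ℤ, ‖conj (c m) * c (m + n)‖ :=
        norm_tsum_le_tsum_norm (by simpa [norm_mul] using hprod)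
      _ = ∑' m : ℤ, ‖c m‖ * ‖c (m + n)‖ := by simp [norm_mul]
  have hpoint : ∀ m : ℤ, ENNReal.ofReal (‖c m‖ * ‖c (m + n)‖)
      ≤ ((if m + n ∈ Λ then 1 else 0) * ENNReal.ofReal (‖c m‖ ^ 2)
        + (if m ∈ Λ then 1 else 0) * ENNReal.ofReal (‖c (m + n)‖ ^ 2)) / 2 := by
    intro m
    by_cases h0 : c m = 0
    · simp [h0]
    by_cases h1 : c (m + n) = 0
    · simp [h1]
    have hmΛ : m ∈ Λ := by
      by_contra hk; exact h0 (coeff_vanish Λ f hf m hk)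
    have hmnΛ : m + n ∈ Λ := by
      by_contra hk; exact h1 (coeff_vanish Λ f hf (m + n) hk)
    rw [if_pos hmΛ, if_pos hmnΛ, one_mul, one_mul]
    calc ENNReal.ofReal (‖c m‖ * ‖c (m + n)‖)
        ≤ ENNReal.ofReal ((‖c m‖ ^ 2 + ‖c (m + n)‖ ^ 2) / 2) :=
          ENNReal.ofReal_le_ofReal (by nlinarith [sq_nonneg (‖c m‖ - ‖c (m + n)‖)])
      _ = (ENNReal.ofReal (‖c m‖ ^ 2) + ENNReal.ofReal (‖c (m + n)‖ ^ 2)) / 2 := by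
          rw [ENNReal.ofReal_div_of_pos two_pos,
            ENNReal.ofReal_add (by positivity) (by positivity), ENNReal.ofReal_ofNat]
  have hre : ∑' m : ℤ, (if m ∈ Λ then (1:ℝ≥0∞) else 0) * ENNReal.ofReal (‖c (m + n)‖ ^ 2)
      = ∑' m : ℤ, (if m - n ∈ Λ then (1:ℝ≥0∞) else 0) * ENNReal.ofReal (‖c m‖ ^ 2) := by
    rw [← (Equiv.addRight n).tsum_eq
      (fun m : ℤ => (if m - n ∈ Λ then (1:ℝ≥0∞) else 0) * ENNReal.ofReal (‖c m‖ ^ 2))]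
    apply tsum_congr
    intro m
    simp [Equiv.coe_addRight, add_sub_cancel_right]
  calc ENNReal.ofReal ‖fourierCoeff (fun ξ : AddCircle (1:ℝ) => ((‖f ξ‖ ^ 2 : ℝ) : ℂ)) n‖
      ≤ ENNReal.ofReal (∑' m : ℤ, ‖c m‖ * ‖c (m + n)‖) := ENNReal.ofReal_le_ofReal h1
    _ = ∑' m : ℤ, ENNReal.ofReal (‖c m‖ * ‖c (m + n)‖) :=
        ENNReal.ofReal_tsum_of_nonneg (fun m => by positivity) hprod
    _ ≤ ∑' m : ℤ, ((if m + n ∈ Λ then 1 else 0) * ENNReal.ofReal (‖c m‖ ^ 2)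
          + (if m ∈ Λ then 1 else 0) * ENNReal.ofReal (‖c (m + n)‖ ^ 2)) / 2 :=
        ENNReal.tsum_le_tsum hpoint
    _ = (∑' m : ℤ, (if m + n ∈ Λ then 1 else 0) * ENNReal.ofReal (‖c m‖ ^ 2)
          + ∑' m : ℤ, (if m ∈ Λ then 1 else 0) * ENNReal.ofReal (‖c (m + n)‖ ^ 2)) / 2 := by
        simp only [div_eq_mul_inv]
        rw [ENNReal.tsum_mul_right, ENNReal.tsum_add]
    _ = _ := by rw [hre]

open Classical in
/-- Lemma 4.2: for `f ∈ H_Λ` with `‖f‖ = 1` and `F = |f|²`, for any finite interval `J`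
of integers, `Σ_{n∈J} |F̂(n)| ≤ D_Λ(|J|)`. -/
theorem sum_abs_fourierCoeff_le_density
    (Λ : Set ℤ) (f : Lp ℂ 2 μT) (hf : f ∈ HLam Λ) (hnorm : ‖f‖ = 1)
    (a b : ℤ) :
    ENNReal.ofReal
        (∑ n ∈ Finset.Icc a b,
          ‖fourierCoeff (fun ξ : AddCircle (1:ℝ) => ((‖f ξ‖ ^ 2 : ℝ) : ℂ)) n‖) ≤
      DLamZ Λ ((Finset.Icc a b).card : ℝ) := by
  set J := Finset.Icc a b with hJ
  set D := DLamZ Λ (J.card : ℝ) with hD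
  set c : ℤ → ℂ := fun m => fourierCoeff (f : AddCircle (1:ℝ) → ℂ) m with hc
  set C : ℤ → ℝ≥0∞ := fun m => ENNReal.ofReal (‖c m‖ ^ 2) with hC
  have hC1 : ∑' m : ℤ, C m = 1 := by
    rw [hC, ← ENNReal.ofReal_tsum_of_nonneg (fun m => by positivity)
      (hasSum_parseval f hnorm).summable, (hasSum_parseval f hnorm).tsum_eq,
      ENNReal.ofReal_one]
  have key1 : ∑ n ∈ J, ∑' m : ℤ, (if m + n ∈ Λ then 1 else 0) * C m ≤ D := by
    rw [← Summable.tsum_finsetSum (fun n _ => ENNReal.summable)]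
    calc ∑' m : ℤ, ∑ n ∈ J, (if m + n ∈ Λ then (1:ℝ≥0∞) else 0) * C m
        = ∑' m : ℤ, ((J.filter (fun n => m + n ∈ Λ)).card : ℝ≥0∞) * C m := by
          apply tsum_congr; intro m
          rw [← Finset.sum_mul, Finset.sum_boole]
      _ ≤ ∑' m : ℤ, D * C m := by
          apply ENNReal.tsum_le_tsum; intro m
          exact mul_le_mul_left (count_add_le Λ m a b) (C m)
      _ = D := by rw [ENNReal.tsum_mul_left, hC1, mul_one]
  have key2 : ∑ n ∈ J, ∑' m : ℤ, (if m - n ∈ Λ then 1 else 0) * C m ≤ D := by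
    rw [← Summable.tsum_finsetSum (fun n _ => ENNReal.summable)]
    calc ∑' m : ℤ, ∑ n ∈ J, (if m - n ∈ Λ then (1:ℝ≥0∞) else 0) * C m
        = ∑' m : ℤ, ((J.filter (fun n => m - n ∈ Λ)).card : ℝ≥0∞) * C m := by
          apply tsum_congr; intro m
          rw [← Finset.sum_mul, Finset.sum_boole]
      _ ≤ ∑' m : ℤ, D * C m := by
          apply ENNReal.tsum_le_tsum; intro m
          exact mul_le_mul_left (count_sub_le Λ m a b) (C m)
      _ = D := by rw [ENNReal.tsum_mul_left, hC1, mul_one]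
  calc ENNReal.ofReal
        (∑ n ∈ J, ‖fourierCoeff (fun ξ : AddCircle (1:ℝ) => ((‖f ξ‖ ^ 2 : ℝ) : ℂ)) n‖)
      = ∑ n ∈ J,
          ENNReal.ofReal ‖fourierCoeff (fun ξ : AddCircle (1:ℝ) => ((‖f ξ‖ ^ 2 : ℝ) : ℂ)) n‖ :=
        ENNReal.ofReal_sum_of_nonneg (fun n _ => norm_nonneg _)
    _ ≤ ∑ n ∈ J, (∑' m : ℤ, (if m + n ∈ Λ then 1 else 0) * C m
          + ∑' m : ℤ, (if m - n ∈ Λ then 1 else 0) * C m) / 2 :=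
        Finset.sum_le_sum (fun n _ => per_n Λ f hf hnorm n)
    _ = (∑ n ∈ J, ∑' m : ℤ, (if m + n ∈ Λ then 1 else 0) * C m
          + ∑ n ∈ J, ∑' m : ℤ, (if m - n ∈ Λ then 1 else 0) * C m) / 2 := by
        simp only [div_eq_mul_inv]
        rw [← Finset.sum_mul, Finset.sum_add_distrib]
    _ ≤ (D + D) / 2 := by gcongr
    _ = D := by
        rw [← two_mul, mul_comm 2 D, mul_div_assoc,
          ENNReal.div_self (by norm_num) (by norm_num), mul_one]
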